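/- Let L/ℚ_ℓ be a finite extension with ring of integers O_L, let k, n_1,…,n_k be positive integers and V_1,…,V_k finite-dimensional L-vector spaces. Set V = ⊕_{i=1}^k L^{n_i} ⊗ V_i and let E = ∏_{i=1}^k End(O_L^{n_i}) ⊗ Id_{V_i} act on V. Let W ≤ V be an O_L-submodule and λ ∈ L with λ·E·W ⊆ W. Then there exist O_L-submodules Λ_i ≤ V_i such that λ·(⊕_{i=1}^k O_L^{n_i} ⊗_{O_L} Λ_i) ⊆ W and λ·W ⊆ ⊕_{i=1}^k O_L^{n_i} ⊗_{O_L} Λ_i. -/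

import Mathlib

open scoped BigOperators

/-- split case: `O_L` is the ring of integers of a finite extension
`L/ℚ_ℓ` (modelled as a subring `A` of a field `L`, via `Algebra A L`),
`V = ⊕_i L^{n_i} ⊗ V_i`, `E = ∏_i End(O_L^{n_i}) ⊗ Id` acts on the first factors,
`W ≤ V` an `O_L`-submodule and `λ ∈ L` with `λ·E·W ⊆ W`. Then there are
`O_L`-submodules `Λ_i ≤ V_i` with `λ·(⊕ O_L^{n_i} ⊗ Λ_i) ⊆ W` and
`λ·W ⊆ ⊕ O_L^{n_i} ⊗ Λ_i`. -/
theorem stmt_11 (L : Type*) [Field L] (A : Type*) [CommRing A] [Algebra A L]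
    (hinj : Function.Injective (algebraMap A L))
    (ι : Type*) [Fintype ι] (n : ι → ℕ)
    (V : ι → Type*) [∀ i, AddCommGroup (V i)] [∀ i, Module L (V i)]
    [∀ i, Module A (V i)] [∀ i, IsScalarTower A L (V i)]
    (W : Submodule A (∀ i, Fin (n i) → V i))
    (lam : L)
    (hW : ∀ w ∈ W, ∀ g : ∀ i, Matrix (Fin (n i)) (Fin (n i)) A,
      (fun i m => lam • ∑ m', g i m m' • w i m') ∈ W) :
    ∃ Λ : ∀ i, Submodule A (V i),
      (∀ v : ∀ i, Fin (n i) → V i, (∀ i m, v i m ∈ Λ i) →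
        (fun i m => lam • v i m) ∈ W) ∧
      (∀ w ∈ W, ∀ i m, lam • w i m ∈ Λ i) := by
  classical
  -- `Λ i` consists of all `x` such that `e_{i,m} ⊗ x ∈ W` for all `m`.
  refine ⟨fun i =>
    { carrier := {x | ∀ m, Pi.single i ((Pi.single m x : Fin (n i) → V i)) ∈ W}
      add_mem' := ?_
      zero_mem' := ?_
      smul_mem' := ?_ }, ?_, ?_⟩
  · intro x y hx hy m
    have := W.add_mem (hx m) (hy m)
    simpa [Pi.single_add] using this
  · intro m
    simp
  · intro a x hx m
    have := W.smul_mem a (hx m)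
    simpa [Pi.single_smul] using this
  -- key lemma A: matrix units
  · have keyA : ∀ w ∈ W, ∀ i (m m' : Fin (n i)),
        Pi.single i (Pi.single m (lam • w i m')) ∈ W := by
      intro w hw i m m'
      have := hW w hw (Pi.single i (Matrix.single m m' 1))
      convert this using 1
      funext j m''
      by_cases hj : j = i
      · subst hj
        by_cases hm : m'' = m
        · subst hm
          simp [Matrix.single, ite_smul, Finset.sum_ite_eq]
        · simp [Matrix.single, Pi.single_eq_of_ne hm, Ne.symm hm]
      · simp [Pi.single_eq_of_ne hj]
    -- key lemma B: identity matrix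
    have keyB : ∀ u ∈ W, (fun (j : ι) (m'' : Fin (n j)) => lam • u j m'') ∈ W := by
      intro u hu
      have := hW u hu (fun _ => 1)
      simpa [Matrix.one_apply, ite_smul, Finset.sum_ite_eq] using this
    intro v hv
    have hsingle : ∀ i m, Pi.single i (Pi.single m (lam • v i m)) ∈ W := by
      intro i m
      have h1 : Pi.single i (Pi.single m (v i m)) ∈ W := hv i m m
      have := keyB _ h1
      convert this using 1
      funext j m''
      by_cases hj : j = i
      · subst hj
        by_cases hm : m'' = m
        · subst hm; simp
        · simp [Pi.single_eq_of_ne hm]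
      · simp [Pi.single_eq_of_ne hj]
    have heq : (fun i m => lam • v i m) =
        ∑ i : ι, ∑ m : Fin (n i), Pi.single i (Pi.single m (lam • v i m)) := by
      funext j m''
      simp only [Finset.sum_apply]
      rw [Finset.sum_eq_single j]
      · rw [Finset.sum_eq_single m'']
        · simp
        · intro b _ hb
          rw [Pi.single_eq_same, Pi.single_eq_of_ne (Ne.symm hb)]
        · intro h; exact absurd (Finset.mem_univ m'') h
      · intro b _ hb
        refine Finset.sum_eq_zero fun m _ => ?_
        have : Pi.single b (Pi.single m (lam • v b m)) j = 0 :=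
          Pi.single_eq_of_ne (M := fun a => Fin (n a) → V a) (Ne.symm hb) _
        rw [this]; rfl
      · intro h; exact absurd (Finset.mem_univ j) h
    rw [heq]
    exact Submodule.sum_mem _ fun i _ => Submodule.sum_mem _ fun m _ => hsingle i m
  · intro w hw i m m''
    -- need: Pi.single i (Pi.single m'' (lam • w i m)) ∈ W
    have := hW w hw (Pi.single i (Matrix.single m'' m 1))
    convert this using 1
    funext j m'
    by_cases hj : j = i
    · subst hj
      by_cases hm : m' = m''
      · subst hm
        simp [Matrix.single, ite_smul, Finset.sum_ite_eq]
      · simp [Matrix.single, Pi.single_eq_of_ne hm, Ne.symm hm]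
    · simp [Pi.single_eq_of_ne hj]
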